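/- Let A₋₁ be an n×n complex matrix and B an n×m complex matrix such that rank[μI − A₋₁, B] = n for every nonzero μ ∈ ℂ. Then for every ω > 0 there exists an m×n matrix F₋₁ such that every eigenvalue μ of A₋₁ + B F₋₁ satisfies either μ = 0 or log|μ| < −ω. -/

import Mathlib

open Matrix

private lemma key_pole : ∀ (d : ℕ) (V : Type) [AddCommGroup V] [Module ℂ V]
    [FiniteDimensional ℂ V], Module.finrank ℂ V = d → ∀ {m : ℕ} (f : V →ₗ[ℂ] V)
    (g : (Fin m → ℂ) →ₗ[ℂ] V),
    (∀ μ : ℂ, μ ≠ 0 → ∀ y : V, ∃ x u, μ • x - f x + g u = y) →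
    ∃ k : V →ₗ[ℂ] (Fin m → ℂ),
      ∀ (μ : ℂ) (x : V), x ≠ 0 → (f + g ∘ₗ k) x = μ • x → μ = 0 := by
  intro d
  induction d with
  | zero =>
    intro V _ _ _ hV m f g _
    refine ⟨0, fun μ x hx _ => absurd ?_ hx⟩
    have : Subsingleton V := Module.finrank_zero_iff.mp hV
    exact Subsingleton.elim x 0
  | succ d ih =>
    intro V _ _ _ hV m f g hH
    have hnt : Nontrivial V := Module.finrank_pos_iff.mp (by rw [hV]; exact Nat.succ_pos d)
    -- Step A: find k₁ and v ≠ 0 with (f + g ∘ k₁) v = 0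
    obtain ⟨k₁, v, hv0, hker⟩ :
        ∃ (k₁ : V →ₗ[ℂ] (Fin m → ℂ)) (v : V), v ≠ 0 ∧ (f + g ∘ₗ k₁) v = 0 := by
      obtain ⟨μ₀, hμ₀⟩ := Module.End.exists_eigenvalue f
      obtain ⟨w, hw⟩ := hμ₀.exists_hasEigenvector
      by_cases hz : μ₀ = 0
      · exact ⟨0, w, hw.right, by
          simpa [hz] using hw.apply_eq_smul⟩
      · -- μ₀ ≠ 0 : build a "left eigenvector" functional
        set S : Submodule ℂ V := LinearMap.range (μ₀ • (LinearMap.id : V →ₗ[ℂ] V) - f)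
        have hni : ¬ Function.Injective (μ₀ • (LinearMap.id : V →ₗ[ℂ] V) - f) := by
          intro hinj
          have h0 : (μ₀ • (LinearMap.id : V →ₗ[ℂ] V) - f) w = 0 := by
            simp [hw.apply_eq_smul]
          have := hinj (a₁ := w) (a₂ := 0) (by simpa using h0)
          exact hw.right this
        have hns : ¬ Function.Surjective (μ₀ • (LinearMap.id : V →ₗ[ℂ] V) - f) := by
          rwa [← LinearMap.injective_iff_surjective]
        obtain ⟨y, hy⟩ : ∃ y, y ∉ S := by
          by_contra hall
          push_neg at hall
          exact hns fun y => LinearMap.mem_range.mp (hall y)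
        obtain ⟨φ, hφy, hφS⟩ := S.exists_dual_map_eq_bot_of_notMem hy inferInstance
        have hφS' : ∀ x : V, φ (μ₀ • x - f x) = 0 := by
          intro x
          have : φ (μ₀ • x - f x) ∈ S.map φ := ⟨μ₀ • x - f x, ⟨x, rfl⟩, rfl⟩
          rw [hφS] at this
          simpa using this
        have hφf : ∀ x : V, φ (f x) = μ₀ * φ x := by
          intro x
          have := hφS' x
          rw [map_sub, _root_.map_smul, sub_eq_zero] at this
          simpa [smul_eq_mul] using this.symm
        -- use Hautus at μ₀ to find u with φ (g u) ≠ 0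
        obtain ⟨x₀, u₀, hx₀⟩ := hH μ₀ hz y
        have hgu : φ (g u₀) ≠ 0 := by
          intro h0
          apply hφy
          have := congrArg φ hx₀
          rw [map_add, hφS' x₀, zero_add, h0] at this
          exact this.symm
        set c : ℂ := φ (g u₀)
        set k₁ : V →ₗ[ℂ] (Fin m → ℂ) := φ.smulRight ((-(μ₀ / c)) • u₀)
        refine ⟨k₁, ?_⟩
        -- φ ∘ (f + g k₁) = 0, so f + g k₁ is not injective
        have hcomp : ∀ x : V, φ ((f + g ∘ₗ k₁) x) = 0 := by
          intro x
          simp only [LinearMap.add_apply, LinearMap.comp_apply, map_add, hφf]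
          have : k₁ x = (φ x * (-(μ₀ / c))) • u₀ := by
            simp [k₁, LinearMap.smulRight_apply, smul_smul]
          rw [this, _root_.map_smul, _root_.map_smul]
          field_simp [c]
          rw [smul_eq_mul, show φ (g u₀) = c from rfl, neg_mul, div_mul_cancel₀ _ hgu]
          ring
        have hni : ¬ Function.Injective (f + g ∘ₗ k₁) := by
          intro hinj
          have hsurj := (LinearMap.injective_iff_surjective ).mp hinj
          obtain ⟨x, hx⟩ := hsurj y
          apply hφy
          rw [← hx]
          exact hcomp x
        rw [injective_iff_map_eq_zero] at hni
        push_neg at hni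
        obtain ⟨v, hv1, hv2⟩ := hni
        exact ⟨v, hv2, hv1⟩
    -- Step B: quotient by span v and induct
    set f₁ : V →ₗ[ℂ] V := f + g ∘ₗ k₁ with hf₁
    set p : Submodule ℂ V := Submodule.span ℂ {v} with hp
    have hvp : v ∈ p := Submodule.mem_span_singleton_self v
    have hle : p ≤ p.comap f₁ := by
      rw [Submodule.span_le]
      rintro x rfl
      simp only [Submodule.mem_comap, SetLike.mem_coe]
      rw [hker]
      exact p.zero_mem
    set fbar : (V ⧸ p) →ₗ[ℂ] (V ⧸ p) := p.mapQ p f₁ hle with hfbar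
    set gbar : (Fin m → ℂ) →ₗ[ℂ] (V ⧸ p) := p.mkQ ∘ₗ g with hgbar
    have hQrank : Module.finrank ℂ (V ⧸ p) = d := by
      have h1 := Submodule.finrank_quotient_add_finrank p
      rw [finrank_span_singleton hv0, hV] at h1
      omega
    have hHbar : ∀ μ : ℂ, μ ≠ 0 → ∀ y : V ⧸ p, ∃ x u, μ • x - fbar x + gbar u = y := by
      intro μ hμ y
      obtain ⟨yl, rfl⟩ := p.mkQ_surjective y
      obtain ⟨x, u, hxu⟩ := hH μ hμ yl
      refine ⟨p.mkQ x, u + k₁ x, ?_⟩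
      have : μ • x - f₁ x + g (u + k₁ x) = yl := by
        rw [hf₁]
        simp only [LinearMap.add_apply, LinearMap.comp_apply, map_add]
        rw [← hxu]; abel
      calc μ • p.mkQ x - fbar (p.mkQ x) + gbar (u + k₁ x)
          = p.mkQ (μ • x - f₁ x + g (u + k₁ x)) := by
            simp only [fbar, gbar, map_add, map_sub, _root_.map_smul, LinearMap.comp_apply,
              Submodule.mkQ_apply, Submodule.mapQ_apply]
        _ = p.mkQ yl := by rw [this]
    obtain ⟨kbar, hkbar⟩ := ih (V ⧸ p) hQrank fbar gbar hHbar
    refine ⟨k₁ + kbar ∘ₗ p.mkQ, ?_⟩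
    intro μ x hx hxeq
    set f₂ : V →ₗ[ℂ] V := f + g ∘ₗ (k₁ + kbar ∘ₗ p.mkQ) with hf₂
    have hf₂' : ∀ z : V, f₂ z = f₁ z + g (kbar (p.mkQ z)) := by
      intro z
      simp [f₂, f₁, map_add, add_assoc]
    have hf₂v : f₂ v = 0 := by
      rw [hf₂' v, hker]
      have : p.mkQ v = 0 := (Submodule.Quotient.mk_eq_zero p).mpr hvp
      rw [this]
      simp
    have hproj : (fbar + gbar ∘ₗ kbar) (p.mkQ x) = μ • p.mkQ x := by
      have : p.mkQ (f₂ x) = (fbar + gbar ∘ₗ kbar) (p.mkQ x) := by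
        rw [hf₂' x]
        simp only [fbar, gbar, map_add, LinearMap.add_apply, LinearMap.comp_apply,
          Submodule.mkQ_apply, Submodule.mapQ_apply]
      rw [← this, hxeq, _root_.map_smul]
    by_cases hqx : p.mkQ x = 0
    · -- x ∈ span v, so x = c • v and f₂ x = 0
      rw [Submodule.mkQ_apply, Submodule.Quotient.mk_eq_zero] at hqx
      obtain ⟨c, rfl⟩ := Submodule.mem_span_singleton.mp hqx
      have : f₂ (c • v) = 0 := by rw [_root_.map_smul, hf₂v, smul_zero]
      rw [this] at hxeq
      have hcv : (c • v : V) ≠ 0 := hx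
      rcases smul_eq_zero.mp hxeq.symm with h | h
      · exact h
      · exact absurd h hcv
    · exact hkbar μ (p.mkQ x) hqx hproj

theorem stmt15 {n m : ℕ} (A : Matrix (Fin n) (Fin n) ℂ) (B : Matrix (Fin n) (Fin m) ℂ)
    (h : ∀ μ : ℂ, μ ≠ 0 →
      (Matrix.fromCols (μ • (1 : Matrix (Fin n) (Fin n) ℂ) - A) B).rank = n) :
    ∀ ω : ℝ, 0 < ω → ∃ F : Matrix (Fin m) (Fin n) ℂ,
      ∀ μ : ℂ, (μ • (1 : Matrix (Fin n) (Fin n) ℂ) - (A + B * F)).det = 0 →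
        μ = 0 ∨ Real.log (‖μ‖) < -ω := by
  intro ω hω
  -- turn the rank condition into surjectivity (Hautus condition)
  have hH : ∀ μ : ℂ, μ ≠ 0 → ∀ y : Fin n → ℂ,
      ∃ x u, μ • x - A.mulVecLin x + B.mulVecLin u = y := by
    intro μ hμ y
    have hr := h μ hμ
    have hsurj : Function.Surjective
        (Matrix.fromCols (μ • (1 : Matrix (Fin n) (Fin n) ℂ) - A) B).mulVecLin := by
      rw [← LinearMap.range_eq_top]
      apply Submodule.eq_top_of_finrank_eq
      rw [Module.finrank_fin_fun]
      exact hr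
    obtain ⟨z, hz⟩ := hsurj y
    refine ⟨z ∘ Sum.inl, z ∘ Sum.inr, ?_⟩
    have hze : z = Sum.elim (z ∘ Sum.inl) (z ∘ Sum.inr) := by
      funext i; cases i <;> rfl
    rw [Matrix.mulVecLin_apply, hze,
      Matrix.fromCols_mulVec_sumElim, Matrix.sub_mulVec,
      Matrix.smul_mulVec, Matrix.one_mulVec] at hz
    simpa using hz
  obtain ⟨k, hk⟩ := key_pole n (Fin n → ℂ) (Module.finrank_fin_fun ℂ)
    A.mulVecLin B.mulVecLin hH
  refine ⟨LinearMap.toMatrix' k, fun μ hdet => Or.inl ?_⟩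
  obtain ⟨x, hx0, hxv⟩ := Matrix.exists_mulVec_eq_zero_iff.mpr hdet
  apply hk μ x hx0
  rw [Matrix.sub_mulVec, Matrix.smul_mulVec, Matrix.one_mulVec, sub_eq_zero] at hxv
  have hkx : (LinearMap.toMatrix' k) *ᵥ x = k x := by
    rw [← Matrix.toLin'_apply, Matrix.toLin'_toMatrix']
  have hBF : (A + B * LinearMap.toMatrix' k).mulVec x
      = A.mulVecLin x + B.mulVecLin (k x) := by
    rw [Matrix.add_mulVec]
    congr 1
    rw [← Matrix.mulVec_mulVec, hkx]
    rfl
  simp only [LinearMap.add_apply, LinearMap.comp_apply]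
  rw [← hBF, ← hxv]
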